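/- There exists an incomplete table T over a schema R with attribute sets X, Y ⊆ R such that T satisfies Lien's null multivalued dependency (NMVD) X ↠ Y but T violates the strongly possible multivalued dependency X ↠_sp Y. -/

import Mathlib

/- Common framework: incomplete tables, strongly possible worlds and constraints.
   A tuple assigns each attribute a value in `Option V`, with `none` encoding the
   null marker ⊥.  In the degenerate case of an attribute whose active domain is
   empty, the fresh symbol `s` (outside all domains) is encoded by `none` in the
   strongly possible world: it is a single fixed symbol, equal only to itself and
   different from every domain value, exactly as `none` behaves. -/

namespace SPDB

variable {α V : Type} [DecidableEq α] [DecidableEq V]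

/-- A tuple over attribute type `α` with values in `V`; `none` is the null ⊥. -/
abbrev Tuple (α V : Type) := α → Option V

/-- An incomplete table: a finite multiset of tuples. -/
abbrev Table (α V : Type) := Multiset (Tuple α V)

/-- The active domain of attribute `A` in table `T`: the non-null values in column `A`. -/
def VD (T : Table α V) (A : α) : Finset V :=
  (T.filterMap fun t => t A).toFinset

/-- `t'` is a strongly possible extension of `t` w.r.t. the active domains of `T`:
non-null entries are kept, each null is replaced by an active domain value
(by the fresh symbol, encoded `none`, if the active domain is empty). -/
def spExt (T : Table α V) (t t' : Tuple α V) : Prop :=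
  ∀ A, (t A ≠ none → t' A = t A) ∧
       (t A = none → if (VD T A).Nonempty then ∃ v ∈ VD T A, t' A = some v
                     else t' A = none)

/-- `T'` is a strongly possible world of `T`. -/
def spWorld (T T' : Table α V) : Prop := Multiset.Rel (spExt T) T T'

/-- Two tuples agree on the attribute set `X`. -/
def agrees (X : Finset α) (t1 t2 : Tuple α V) : Prop := ∀ A ∈ X, t1 A = t2 A

/-- Weak similarity on the attribute set `X`. -/
def weakSim (X : Finset α) (t1 t2 : Tuple α V) : Prop :=
  ∀ A ∈ X, t1 A = t2 A ∨ t1 A = none ∨ t2 A = none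

/-- `t` is `X`-total: no nulls among the attributes of `X`. -/
def isTotal (X : Finset α) (t : Tuple α V) : Prop := ∀ A ∈ X, t A ≠ none

instance (X : Finset α) : DecidablePred (isTotal (V := V) X) := fun t =>
  decidable_of_iff (∀ A ∈ X, t A ≠ none) Iff.rfl

/-- Projection of a tuple to the attribute set `X` (nulls outside `X`). -/
def proj (X : Finset α) (t : Tuple α V) : Tuple α V :=
  fun A => if A ∈ X then t A else none

/-- A (complete) table satisfies the key `K`: tuple occurrences are pairwise distinct on `K`. -/
def keyOn (K : Finset α) (T' : Table α V) : Prop := (T'.map (proj K)).Nodup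

/-- A (complete) table satisfies the functional dependency `X → Y`. -/
def FD (X Y : Finset α) (T' : Table α V) : Prop :=
  ∀ t1 ∈ T', ∀ t2 ∈ T', agrees X t1 t2 → agrees Y t1 t2

/-- A (complete) table over schema `R` satisfies the multivalued dependency `X ↠ Y`. -/
def MVD (R X Y : Finset α) (T' : Table α V) : Prop :=
  ∀ t1 ∈ T', ∀ t2 ∈ T', agrees X t1 t2 →
    ∃ t ∈ T', agrees (X ∪ Y) t t1 ∧ agrees (X ∪ (R \ Y)) t t2

/-- A (complete) table satisfies the cross join `X × Y`. -/
def CJ (X Y : Finset α) (T' : Table α V) : Prop :=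
  ∀ t1 ∈ T', ∀ t2 ∈ T', ∃ t ∈ T', agrees X t t1 ∧ agrees Y t t2

/-- `K` is a strongly possible key of `T`: `sp⟨K⟩`. -/
def spKey (T : Table α V) (K : Finset α) : Prop :=
  ∃ T', spWorld T T' ∧ keyOn K T'

/-- The strongly possible functional dependency `X →_sp Y` holds in `T`. -/
def spFD (T : Table α V) (X Y : Finset α) : Prop :=
  ∃ T', spWorld T T' ∧ FD X Y T'

/-- The strongly possible multivalued dependency `X ↠_sp Y` holds in `T` over schema `R`. -/
def spMVD (R : Finset α) (T : Table α V) (X Y : Finset α) : Prop :=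
  ∃ T', spWorld T T' ∧ MVD R X Y T'

/-- The strongly possible cross join `X ×_sp Y` holds in `T`. -/
def spCJ (T : Table α V) (X Y : Finset α) : Prop :=
  ∃ T', spWorld T T' ∧ CJ X Y T'

/-- Lien's null multivalued dependency `X ↠ Y` over schema `R`. -/
def NMVD (R : Finset α) (T : Table α V) (X Y : Finset α) : Prop :=
  ∀ t1 ∈ T, ∀ t2 ∈ T, isTotal X t1 → isTotal X t2 → agrees X t1 t2 →
    ∃ t ∈ T, agrees (X ∪ Y) t t1 ∧ agrees (X ∪ (R \ Y)) t t2

/-- The minimum number of tuples whose removal from `T` makes `P` hold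
(`T = T₀ + S` means that `S` is a submultiset of `T` and `T₀ = T ∖ S`). -/
noncomputable def g3Card (T : Table α V) (P : Table α V → Prop) : ℕ :=
  sInf {n : ℕ | ∃ T₀ S : Table α V, T = T₀ + S ∧ P T₀ ∧ Multiset.card S = n}

/-- `g3`: the minimum, over submultisets `S` of `T` whose removal makes the
constraint `P` hold, of `|S|/|T|`. -/
noncomputable def g3 (T : Table α V) (P : Table α V → Prop) : ℚ :=
  (g3Card T P : ℚ) / (Multiset.card T : ℚ)

/-- The minimum number of tuples whose addition to `T` makes `P` hold. -/
noncomputable def g5Card (T : Table α V) (P : Table α V → Prop) : ℕ :=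
  sInf {n : ℕ | ∃ S : Table α V, P (T + S) ∧ Multiset.card S = n}

/-- `g5`: the minimum, over finite multisets `S` of tuples whose addition makes
the constraint `P` hold, of `|S|/|T|`. -/
noncomputable def g5 (T : Table α V) (P : Table α V → Prop) : ℚ :=
  (g5Card T P : ℚ) / (Multiset.card T : ℚ)

end SPDB



open SPDB in
theorem aux_statement14 :
    ∃ (R X Y : Finset ℕ) (T : Table ℕ ℕ), X ⊆ R ∧ Y ⊆ R ∧
      NMVD R T X Y ∧ ¬ spMVD R T X Y := by
  classical
  set a : Tuple ℕ ℕ := fun A => if A = 1 then some 1 else if A = 2 then some 2 else none with ha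
  set b : Tuple ℕ ℕ := fun A => if A = 1 then some 2 else if A = 2 then some 1 else none with hb
  refine ⟨{0,1,2}, {0}, {1}, {a, b}, by decide, by decide, ?_, ?_⟩
  · -- NMVD vacuous: no tuple is X-total
    intro t1 ht1 t2 ht2 hT1 _ _
    exfalso
    have h0 : t1 0 = none := by
      rcases Multiset.mem_cons.mp ht1 with h | h
      · subst h; rfl
      · have : t1 = b := Multiset.mem_singleton.mp h
        subst this; rfl
    exact hT1 0 (by decide) h0
  · rintro ⟨T', hsp, hmvd⟩
    rw [spWorld] at hsp
    obtain ⟨a', as, haa', hrest, hT'⟩ := Multiset.rel_cons_left.mp hsp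
    obtain ⟨b', bs, hbb', hrest2, has⟩ := Multiset.rel_cons_left.mp hrest
    have hbs : bs = 0 := Multiset.rel_zero_left.mp hrest2
    subst hbs
    have hVD0 : VD ({a, b} : Table ℕ ℕ) 0 = ∅ := by
      show ((Multiset.filterMap (fun t => t 0) {a, b}).toFinset = ∅)
      rw [show ({a, b} : Table ℕ ℕ) = a ::ₘ b ::ₘ 0 from rfl,
        Multiset.filterMap_cons_none _ _ rfl, Multiset.filterMap_cons_none _ _ rfl,
        Multiset.filterMap_zero]
      rfl
    -- determine a' and b' on attributes 0,1,2
    have ha'0 : a' 0 = none := by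
      have := (haa' 0).2 rfl
      rw [hVD0] at this; simpa using this
    have hb'0 : b' 0 = none := by
      have := (hbb' 0).2 rfl
      rw [hVD0] at this; simpa using this
    have ha'1 : a' 1 = some 1 := (haa' 1).1 (by simp [ha])
    have ha'2 : a' 2 = some 2 := (haa' 2).1 (by simp [ha])
    have hb'1 : b' 1 = some 2 := (hbb' 1).1 (by simp [hb])
    have hb'2 : b' 2 = some 1 := (hbb' 2).1 (by simp [hb])
    have hma : a' ∈ T' := by rw [hT', has]; exact Multiset.mem_cons_self _ _
    have hmb : b' ∈ T' := by
      rw [hT', has]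
      exact Multiset.mem_cons.mpr (Or.inr (Multiset.mem_cons_self _ _))
    have hagX : agrees {0} a' b' := by
      intro A hA
      have : A = 0 := Finset.mem_singleton.mp hA
      subst this; rw [ha'0, hb'0]
    obtain ⟨t, htT, h1, h2⟩ := hmvd a' hma b' hmb hagX
    have h1mem : (1 : ℕ) ∈ ({0} ∪ {1} : Finset ℕ) := by decide
    have h2mem : (2 : ℕ) ∈ ({0} ∪ ({0,1,2} \ {1}) : Finset ℕ) := by decide
    have ht1 : t 1 = some 1 := by rw [h1 1 h1mem, ha'1]
    have ht2 : t 2 = some 1 := by rw [h2 2 h2mem, hb'2]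
    rw [hT', has] at htT
    rcases Multiset.mem_cons.mp htT with h | h
    · subst h; rw [ha'2] at ht2; exact absurd ht2 (by simp)
    · have : t = b' := Multiset.mem_singleton.mp h
      subst this; rw [hb'1] at ht1; exact absurd ht1 (by simp)

open SPDB in
/-- there is a table satisfying Lien's NMVD `X ↠ Y` but violating the
spMVD `X ↠_sp Y`. -/
theorem statement14 :
    ∃ (R X Y : Finset ℕ) (T : Table ℕ ℕ), X ⊆ R ∧ Y ⊆ R ∧
      NMVD R T X Y ∧ ¬ spMVD R T X Y :=
  aux_statement14
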